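/- The function α_τ = −τ + √(2/π) e^{−τ²/2} / erfc(τ/√2) is strictly positive and strictly decreasing in τ ∈ ℝ, with α_τ ∼ −τ as τ → −∞ and α_τ ∼ 1/τ as τ → +∞. -/

import Mathlib

open Filter Real

/-- The complementary error function `erfc(x) = (2/√π) ∫_x^∞ e^{-t²} dt`. -/
noncomputable def erfc (x : ℝ) : ℝ :=
  2 / Real.sqrt π * ∫ t in Set.Ioi x, Real.exp (-t ^ 2)

/-- `α_τ = −τ + √(2/π) e^{−τ²/2} / erfc(τ/√2)`. -/
noncomputable def alphaConst (τ : ℝ) : ℝ :=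
  -τ + Real.sqrt (2 / π) * Real.exp (-τ ^ 2 / 2) / erfc (τ / Real.sqrt 2)

open Filter Real MeasureTheory Set

noncomputable def gg (x : ℝ) : ℝ := Real.exp (-x ^ 2 / 2)
noncomputable def GG (x : ℝ) : ℝ := ∫ t in Set.Ioi x, gg t

lemma gg_pos (x : ℝ) : 0 < gg x := Real.exp_pos _

lemma gg_cont : Continuous gg := by
  unfold gg; continuity

lemma gg_int : Integrable gg := by
  have h := integrable_exp_neg_mul_sq (b := (1/2 : ℝ)) (by norm_num)
  have : (fun x : ℝ => Real.exp (-(1/2) * x ^ 2)) = gg := by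
    funext x; unfold gg; congr 1; ring
  rwa [this] at h

lemma tgg_int : Integrable (fun t : ℝ => t * gg t) := by
  have h := integrable_mul_exp_neg_mul_sq (b := (1/2 : ℝ)) (by norm_num)
  have : (fun x : ℝ => x * Real.exp (-(1/2) * x ^ 2)) = fun t => t * gg t := by
    funext x; unfold gg; congr 2; ring
  rwa [this] at h

lemma GG_pos (x : ℝ) : 0 < GG x := by
  rw [GG, MeasureTheory.setIntegral_pos_iff_support_of_nonneg_ae
    (Filter.Eventually.of_forall fun t => (gg_pos t).le) gg_int.integrableOn]
  have : Function.support gg = Set.univ := by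
    ext t; simp [Function.mem_support, (gg_pos t).ne']
  rw [this, Set.univ_inter, Real.volume_Ioi]
  exact ENNReal.zero_lt_top

lemma GG_anti : Antitone GG := by
  intro a b hab
  exact setIntegral_mono_set gg_int.integrableOn
    (Filter.Eventually.of_forall fun t => (Real.exp_pos _).le)
    (HasSubset.Subset.eventuallyLE (Set.Ioi_subset_Ioi hab))

lemma GG_split (a b : ℝ) (hab : a ≤ b) : GG a = (∫ t in a..b, gg t) + GG b := by
  rw [intervalIntegral.integral_of_le hab, GG, GG,
    ← MeasureTheory.setIntegral_union (Set.Ioc_disjoint_Ioi le_rfl) measurableSet_Ioi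
      gg_int.integrableOn gg_int.integrableOn, Set.Ioc_union_Ioi_eq_Ioi hab]

lemma GG_eq (x : ℝ) : GG x = GG 0 - ∫ t in (0:ℝ)..x, gg t := by
  rcases le_total 0 x with h | h
  · have := GG_split 0 x h; linarith
  · have := GG_split x 0 h
    rw [intervalIntegral.integral_symm] at this
    linarith

lemma GG_hasDeriv (x : ℝ) : HasDerivAt GG (-(gg x)) x := by
  have : GG = fun x => GG 0 - ∫ t in (0:ℝ)..x, gg t := funext GG_eq
  rw [this]
  exact HasDerivAt.const_sub _ (intervalIntegral.integral_hasDerivAt_right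
    gg_int.intervalIntegrable (gg_cont.stronglyMeasurableAtFilter _ _)
    gg_cont.continuousAt)

lemma neg_sq_half_atTop : Tendsto (fun t : ℝ => -t ^ 2 / 2) atBot atBot ∧
    Tendsto (fun t : ℝ => -t ^ 2 / 2) atTop atBot := by
  have h1 : Tendsto (fun t : ℝ => t ^ 2) atTop atTop := tendsto_pow_atTop two_ne_zero
  have h2 : Tendsto (fun t : ℝ => t ^ 2) atBot atTop := by
    have := h1.comp tendsto_neg_atBot_atTop
    refine this.congr fun x => by simp [Function.comp]
  constructor
  · exact (tendsto_neg_atTop_atBot.comp h2).atBot_div_const two_pos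
  · exact (tendsto_neg_atTop_atBot.comp h1).atBot_div_const two_pos

lemma gg_tendsto_atTop : Tendsto gg atTop (nhds 0) :=
  Real.tendsto_exp_atBot.comp neg_sq_half_atTop.2

lemma gg_tendsto_atBot : Tendsto gg atBot (nhds 0) :=
  Real.tendsto_exp_atBot.comp neg_sq_half_atTop.1

lemma tgg_tendsto_atTop : Tendsto (fun t : ℝ => t * gg t) atTop (nhds 0) := by
  apply squeeze_zero' (Filter.eventually_atTop.2 ⟨0, fun t ht => mul_nonneg ht (gg_pos t).le⟩)
    (g := fun t : ℝ => t * Real.exp (-t))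
  · refine Filter.eventually_atTop.2 ⟨2, fun t ht => ?_⟩
    have h1 : t ≤ t ^ 2 / 2 := by nlinarith
    have h2 : gg t ≤ Real.exp (-t) :=
      show Real.exp (-t ^ 2 / 2) ≤ Real.exp (-t) from Real.exp_le_exp.2 (by linarith)
    exact mul_le_mul_of_nonneg_left h2 (by linarith)
  · have := Real.tendsto_pow_mul_exp_neg_atTop_nhds_zero 1
    simpa using this

lemma integral_tgg (a : ℝ) : (∫ t in Set.Ioi a, t * gg t) = gg a := by
  have hderiv : ∀ x ∈ Set.Ici a, HasDerivAt (fun t => -gg t) (x * gg x) x := by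
    intro x _
    have h : HasDerivAt (fun t : ℝ => -t ^ 2 / 2) (-x) x := by
      have := ((hasDerivAt_pow 2 x).neg).div_const 2
      simpa using this.congr_deriv (by ring)
    have h2 := (h.exp).fun_neg
    simpa [gg] using h2.congr_deriv (by ring)
  have htends : Tendsto (fun t => -gg t) atTop (nhds 0) := by
    simpa using gg_tendsto_atTop.neg
  have := MeasureTheory.integral_Ioi_of_hasDerivAt_of_tendsto' hderiv
    (tgg_int.integrableOn) htends
  simpa using this

lemma mul_GG_lt_gg (τ : ℝ) : τ * GG τ < gg τ := by
  rcases le_or_gt τ 0 with hτ | hτ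
  · have : τ * GG τ ≤ 0 := mul_nonpos_of_nonpos_of_nonneg hτ (GG_pos τ).le
    exact this.trans_lt (gg_pos τ)
  · have key : (0:ℝ) < ∫ t in Set.Ioi τ, (t - τ) * gg t := by
      rw [MeasureTheory.setIntegral_pos_iff_support_of_nonneg_ae]
      · have hsub : Set.Ioi τ ⊆ Function.support (fun t : ℝ => (t - τ) * gg t) := by
          intro t ht
          simp only [Function.mem_support]
          exact ne_of_gt (mul_pos (sub_pos.2 ht) (gg_pos t))
        rw [Set.inter_eq_self_of_subset_right hsub, Real.volume_Ioi]
        exact ENNReal.zero_lt_top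
      · filter_upwards [MeasureTheory.ae_restrict_mem measurableSet_Ioi] with t ht
        simpa using mul_nonneg (sub_nonneg.2 (le_of_lt ht)) (gg_pos t).le
      · have : (fun t : ℝ => (t - τ) * gg t) = fun t => t * gg t - τ * gg t := by
          funext t; ring
        rw [this]
        exact (tgg_int.integrableOn).sub ((gg_int.const_mul τ).integrableOn)
    have heq : (∫ t in Set.Ioi τ, (t - τ) * gg t) = gg τ - τ * GG τ := by
      have : (fun t : ℝ => (t - τ) * gg t) = fun t => t * gg t - τ * gg t := by
        funext t; ring
      rw [this, MeasureTheory.integral_sub (tgg_int.integrableOn)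
        ((gg_int.const_mul τ).integrableOn), integral_tgg, MeasureTheory.integral_const_mul]
      rfl
    linarith [heq ▸ key]

lemma GG_tendsto_atTop : Tendsto GG atTop (nhds 0) := by
  apply squeeze_zero' (Filter.Eventually.of_forall fun τ => (GG_pos τ).le) (g := gg)
  · refine Filter.eventually_atTop.2 ⟨1, fun τ hτ => ?_⟩
    have h := mul_GG_lt_gg τ
    nlinarith [GG_pos τ]
  · exact gg_tendsto_atTop

lemma sq_GG_tendsto_atTop : Tendsto (fun τ : ℝ => τ ^ 2 * GG τ) atTop (nhds 0) := by
  apply squeeze_zero' (g := fun τ : ℝ => τ * gg τ)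
  · exact Filter.eventually_atTop.2 ⟨0, fun τ hτ =>
      mul_nonneg (sq_nonneg τ) (GG_pos τ).le⟩
  · refine Filter.eventually_atTop.2 ⟨0, fun τ hτ => ?_⟩
    have h := mul_GG_lt_gg τ
    nlinarith [GG_pos τ]
  · exact tgg_tendsto_atTop

lemma pos_of_strictAnti_tendsto {f : ℝ → ℝ} (hf : StrictAnti f)
    (h0 : Tendsto f atTop (nhds 0)) (x : ℝ) : 0 < f x := by
  have h1 : (0:ℝ) ≤ f (x + 1) :=
    le_of_tendsto h0 (Filter.eventually_atTop.2 ⟨x + 1, fun y hy => hf.antitone hy⟩)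
  exact h1.trans_lt (hf (lt_add_one x))

lemma neg_of_strictMono_tendsto {f : ℝ → ℝ} (hf : StrictMono f)
    (h0 : Tendsto f atTop (nhds 0)) (x : ℝ) : f x < 0 := by
  have h1 : f (x + 1) ≤ 0 :=
    ge_of_tendsto h0 (Filter.eventually_atTop.2 ⟨x + 1, fun y hy => hf.monotone hy⟩)
  exact (hf (lt_add_one x)).trans_le h1

lemma gg_hasDeriv (x : ℝ) : HasDerivAt gg (-x * gg x) x := by
  have h : HasDerivAt (fun t : ℝ => -t ^ 2 / 2) (-x) x := by
    have := ((hasDerivAt_pow 2 x).neg).div_const 2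
    simpa using this.congr_deriv (by ring)
  exact h.exp.congr_deriv (by simp only [gg]; ring)

noncomputable def HH (τ : ℝ) : ℝ := (τ ^ 2 + 1) * GG τ - τ * gg τ
noncomputable def FF (τ : ℝ) : ℝ := gg τ ^ 2 - τ * gg τ * GG τ - GG τ ^ 2

lemma HH_hasDeriv (τ : ℝ) : HasDerivAt HH (2 * (τ * GG τ - gg τ)) τ := by
  have h1 : HasDerivAt (fun τ : ℝ => (τ ^ 2 + 1) * GG τ) (2 * τ * GG τ + (τ ^ 2 + 1) * -(gg τ)) τ := by
    have := (((hasDerivAt_pow 2 τ).add_const 1).fun_mul (GG_hasDeriv τ))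
    simpa using this.congr_deriv (by ring)
  have h2 : HasDerivAt (fun τ : ℝ => τ * gg τ) (gg τ + τ * (-τ * gg τ)) τ := by
    have := (hasDerivAt_id' (x := τ)).fun_mul (gg_hasDeriv τ)
    simpa using this.congr_deriv (by ring)
  exact (h1.sub h2).congr_deriv (by ring)

lemma HH_tendsto : Tendsto HH atTop (nhds 0) := by
  have h : Tendsto (fun τ : ℝ => τ ^ 2 * GG τ + GG τ - τ * gg τ) atTop (nhds 0) := by
    have := (sq_GG_tendsto_atTop.add GG_tendsto_atTop).sub tgg_tendsto_atTop
    simpa using this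
  exact h.congr fun τ => by unfold HH; ring

lemma HH_pos (τ : ℝ) : 0 < HH τ := by
  apply pos_of_strictAnti_tendsto _ HH_tendsto
  apply strictAnti_of_deriv_neg
  intro x
  rw [(HH_hasDeriv x).deriv]
  linarith [mul_GG_lt_gg x]

lemma FF_hasDeriv (τ : ℝ) : HasDerivAt FF (gg τ * HH τ) τ := by
  have h1 : HasDerivAt (fun τ : ℝ => gg τ ^ 2) (2 * gg τ * (-τ * gg τ)) τ := by
    have := (gg_hasDeriv τ).fun_pow 2
    simpa using this.congr_deriv (by ring)
  have h2 : HasDerivAt (fun τ : ℝ => τ * gg τ * GG τ)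
      ((gg τ + τ * (-τ * gg τ)) * GG τ + τ * gg τ * -(gg τ)) τ := by
    have := ((hasDerivAt_id' (x := τ)).fun_mul (gg_hasDeriv τ)).fun_mul (GG_hasDeriv τ)
    simpa using this.congr_deriv (by ring)
  have h3 : HasDerivAt (fun τ : ℝ => GG τ ^ 2) (2 * GG τ * -(gg τ)) τ := by
    have := (GG_hasDeriv τ).fun_pow 2
    simpa using this.congr_deriv (by ring)
  exact ((h1.sub h2).sub h3).congr_deriv (by unfold HH; ring)

lemma FF_tendsto : Tendsto FF atTop (nhds 0) := by
  have hmid : Tendsto (fun τ : ℝ => τ * gg τ * GG τ) atTop (nhds 0) := by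
    apply squeeze_zero' (g := fun τ : ℝ => gg τ * gg τ)
    · exact Filter.eventually_atTop.2 ⟨0, fun τ hτ =>
        mul_nonneg (mul_nonneg hτ (gg_pos τ).le) (GG_pos τ).le⟩
    · refine Filter.eventually_atTop.2 ⟨0, fun τ hτ => ?_⟩
      have h := mul_GG_lt_gg τ
      nlinarith [GG_pos τ, gg_pos τ]
    · simpa using gg_tendsto_atTop.mul gg_tendsto_atTop
  have h : Tendsto (fun τ : ℝ => gg τ ^ 2 - τ * gg τ * GG τ - GG τ ^ 2) atTop (nhds 0) := by
    have h1 : Tendsto (fun τ : ℝ => gg τ ^ 2) atTop (nhds 0) := by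
      have := gg_tendsto_atTop.mul gg_tendsto_atTop
      simpa [pow_two] using this
    have h3 : Tendsto (fun τ : ℝ => GG τ ^ 2) atTop (nhds 0) := by
      have := GG_tendsto_atTop.mul GG_tendsto_atTop
      simpa [pow_two] using this
    simpa using (h1.sub hmid).sub h3
  exact h

lemma FF_neg (τ : ℝ) : FF τ < 0 := by
  apply neg_of_strictMono_tendsto _ FF_tendsto
  apply strictMono_of_deriv_pos
  intro x
  rw [(FF_hasDeriv x).deriv]
  exact mul_pos (gg_pos x) (HH_pos x)

lemma sqrt2_pos : (0:ℝ) < Real.sqrt 2 := Real.sqrt_pos.2 two_pos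

lemma erfc_eq (τ : ℝ) : erfc (τ / Real.sqrt 2) = Real.sqrt (2 / π) * GG τ := by
  have hb : (0:ℝ) < (Real.sqrt 2)⁻¹ := inv_pos.2 sqrt2_pos
  have key := MeasureTheory.integral_comp_mul_left_Ioi
    (fun t : ℝ => Real.exp (-t ^ 2)) τ hb
  have hsq : ∀ x : ℝ, ((Real.sqrt 2)⁻¹ * x) ^ 2 = x ^ 2 / 2 := by
    intro x
    rw [mul_pow, inv_pow, Real.sq_sqrt two_pos.le]
    ring
  have hL : (∫ x in Set.Ioi τ, Real.exp (-((Real.sqrt 2)⁻¹ * x) ^ 2)) = GG τ := by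
    apply MeasureTheory.setIntegral_congr_fun measurableSet_Ioi
    intro x _
    show Real.exp (-((Real.sqrt 2)⁻¹ * x) ^ 2) = gg x
    rw [hsq x]
    unfold gg
    congr 1
    ring
  rw [hL] at key
  have hpt : (Real.sqrt 2)⁻¹ * τ = τ / Real.sqrt 2 := by ring
  rw [hpt] at key
  -- key : GG τ = ((Real.sqrt 2)⁻¹)⁻¹ • ∫ x in Ioi (τ / √2), exp (-x^2)
  rw [inv_inv, smul_eq_mul] at key
  have hI : (∫ x in Set.Ioi (τ / Real.sqrt 2), Real.exp (-x ^ 2)) = GG τ / Real.sqrt 2 := by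
    rw [key, mul_div_cancel_left₀ _ sqrt2_pos.ne']
  rw [erfc, hI]
  have hπ : (0:ℝ) < Real.sqrt π := Real.sqrt_pos.2 Real.pi_pos
  have h2 : Real.sqrt (2 / π) = Real.sqrt 2 / Real.sqrt π :=
    Real.sqrt_div two_pos.le π
  rw [h2]
  have h3 : (2:ℝ) / Real.sqrt 2 = Real.sqrt 2 := Real.div_sqrt
  calc 2 / Real.sqrt π * (GG τ / Real.sqrt 2)
      = (2 / Real.sqrt 2) / Real.sqrt π * GG τ := by ring
    _ = Real.sqrt 2 / Real.sqrt π * GG τ := by rw [h3]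

lemma alpha_eq (τ : ℝ) : alphaConst τ = -τ + gg τ / GG τ := by
  have h : Real.sqrt (2 / π) ≠ 0 :=
    ne_of_gt (Real.sqrt_pos.2 (div_pos two_pos Real.pi_pos))
  rw [alphaConst, erfc_eq]
  show -τ + Real.sqrt (2 / π) * gg τ / (Real.sqrt (2 / π) * GG τ) = -τ + gg τ / GG τ
  rw [mul_div_mul_left _ _ h]

lemma alpha_hasDeriv (τ : ℝ) : HasDerivAt alphaConst (FF τ / GG τ ^ 2) τ := by
  have hfun : alphaConst = fun τ => -τ + gg τ / GG τ := funext alpha_eq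
  rw [hfun]
  have hdiv : HasDerivAt (fun τ => gg τ / GG τ)
      ((-τ * gg τ * GG τ - gg τ * -(gg τ)) / GG τ ^ 2) τ :=
    (gg_hasDeriv τ).div (GG_hasDeriv τ) (GG_pos τ).ne'
  have hneg : HasDerivAt (fun τ : ℝ => -τ) (-1) τ := (hasDerivAt_id' (x := τ)).neg
  refine (hneg.add hdiv).congr_deriv ?_
  have hG : GG τ ≠ 0 := (GG_pos τ).ne'
  field_simp [FF]
  rw [FF]; ring

lemma alpha_strictAnti : StrictAnti alphaConst := by
  apply strictAnti_of_deriv_neg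
  intro x
  rw [(alpha_hasDeriv x).deriv]
  exact div_neg_of_neg_of_pos (FF_neg x) (pow_pos (GG_pos x) 2)

lemma alpha_pos (τ : ℝ) : 0 < alphaConst τ := by
  rw [alpha_eq]
  rcases le_or_gt τ 0 with hτ | hτ
  · have := div_pos (gg_pos τ) (GG_pos τ)
    linarith
  · have h : τ < gg τ / GG τ := (lt_div_iff₀ (GG_pos τ)).2 (by
      have := mul_GG_lt_gg τ; linarith)
    linarith

lemma ratio_tendsto_atBot : Tendsto (fun τ : ℝ => gg τ / GG τ) atBot (nhds 0) := by
  apply squeeze_zero' (g := fun τ : ℝ => gg τ * (GG 0)⁻¹)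
  · exact Filter.Eventually.of_forall fun τ => (div_pos (gg_pos τ) (GG_pos τ)).le
  · refine Filter.eventually_atBot.2 ⟨0, fun τ hτ => ?_⟩
    rw [div_eq_mul_inv]
    exact mul_le_mul_of_nonneg_left
      (inv_anti₀ (GG_pos 0) (GG_anti hτ)) (gg_pos τ).le
  · simpa using gg_tendsto_atBot.mul_const (GG 0)⁻¹

lemma alpha_atBot : Tendsto (fun τ : ℝ => alphaConst τ / (-τ)) atBot (nhds 1) := by
  have hsmall : Tendsto (fun τ : ℝ => (gg τ / GG τ) / (-τ)) atBot (nhds 0) := by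
    apply squeeze_zero' (g := fun τ : ℝ => gg τ / GG τ)
    · refine Filter.eventually_atBot.2 ⟨-1, fun τ hτ => ?_⟩
      exact (div_pos (div_pos (gg_pos τ) (GG_pos τ)) (by linarith)).le
    · refine Filter.eventually_atBot.2 ⟨-1, fun τ hτ => ?_⟩
      exact div_le_self (div_pos (gg_pos τ) (GG_pos τ)).le (by linarith)
    · exact ratio_tendsto_atBot
  have h1 : Tendsto (fun τ : ℝ => 1 + (gg τ / GG τ) / (-τ)) atBot (nhds 1) := by
    simpa using (tendsto_const_nhds (x := (1:ℝ)) (f := atBot)).add hsmall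
  refine h1.congr' ?_
  refine Filter.eventually_atBot.2 ⟨-1, fun τ hτ => ?_⟩
  have hτ0 : (-τ) ≠ 0 := by linarith
  show 1 + (gg τ / GG τ) / (-τ) = alphaConst τ / (-τ)
  rw [alpha_eq, add_div, div_self hτ0]

noncomputable def KK (τ : ℝ) : ℝ := gg τ * ((τ ^ 4 - τ ^ 2 + 3) / τ ^ 5) - GG τ

lemma KK_hasDeriv {τ : ℝ} (hτ : τ ≠ 0) : HasDerivAt KK (-15 * gg τ / τ ^ 6) τ := by
  have hq : τ ^ 5 ≠ 0 := pow_ne_zero 5 hτ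
  have hp : HasDerivAt (fun τ : ℝ => τ ^ 4 - τ ^ 2 + 3) (4 * τ ^ 3 - 2 * τ) τ := by
    have := ((hasDerivAt_pow 4 τ).sub (hasDerivAt_pow 2 τ)).add_const 3
    simpa using this.congr_deriv (by ring)
  have hq' : HasDerivAt (fun τ : ℝ => τ ^ 5) (5 * τ ^ 4) τ := by
    simpa using hasDerivAt_pow 5 τ
  have hr : HasDerivAt (fun τ : ℝ => (τ ^ 4 - τ ^ 2 + 3) / τ ^ 5)
      (((4 * τ ^ 3 - 2 * τ) * τ ^ 5 - (τ ^ 4 - τ ^ 2 + 3) * (5 * τ ^ 4)) / (τ ^ 5) ^ 2) τ :=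
    hp.div hq' hq
  have hmul := (gg_hasDeriv τ).mul hr
  refine (hmul.sub (GG_hasDeriv τ)).congr_deriv ?_
  field_simp
  ring

lemma KK_tendsto : Tendsto KK atTop (nhds 0) := by
  have h1 : Tendsto (fun τ : ℝ => gg τ * ((τ ^ 4 - τ ^ 2 + 3) / τ ^ 5)) atTop (nhds 0) := by
    apply squeeze_zero' (g := gg)
    · refine Filter.eventually_atTop.2 ⟨1, fun τ hτ => ?_⟩
      have h5 : (0:ℝ) < τ ^ 5 := pow_pos (by linarith) 5
      have hnum : (0:ℝ) ≤ τ ^ 4 - τ ^ 2 + 3 := by nlinarith [sq_nonneg (τ ^ 2 - 1/2)]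
      exact mul_nonneg (gg_pos τ).le (div_nonneg hnum h5.le)
    · refine Filter.eventually_atTop.2 ⟨2, fun τ hτ => ?_⟩
      have h5 : (0:ℝ) < τ ^ 5 := pow_pos (by linarith) 5
      have hle : (τ ^ 4 - τ ^ 2 + 3) / τ ^ 5 ≤ 1 := by
        rw [div_le_one h5]; nlinarith
      nlinarith [gg_pos τ, mul_le_mul_of_nonneg_left hle (gg_pos τ).le]
    · exact gg_tendsto_atTop
  have h2 := h1.sub GG_tendsto_atTop
  rw [sub_zero] at h2
  exact h2

lemma KK_anti : StrictAntiOn KK (Set.Ioi 0) := by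
  apply strictAntiOn_of_deriv_neg (convex_Ioi 0)
  · exact fun x hx => ((KK_hasDeriv (ne_of_gt hx)).continuousAt).continuousWithinAt
  · intro x hx
    rw [interior_Ioi] at hx
    rw [(KK_hasDeriv (ne_of_gt hx)).deriv]
    exact div_neg_of_neg_of_pos (by nlinarith [gg_pos x]) (pow_pos hx 6)

lemma KK_pos {τ : ℝ} (hτ : 0 < τ) : 0 < KK τ := by
  have h1 : (0:ℝ) ≤ KK (τ + 1) := by
    refine le_of_tendsto KK_tendsto (Filter.eventually_atTop.2 ⟨τ + 1, fun y hy => ?_⟩)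
    exact KK_anti.antitoneOn (Set.mem_Ioi.2 (by linarith)) (Set.mem_Ioi.2 (by linarith)) hy
  exact h1.trans_lt (KK_anti (Set.mem_Ioi.2 hτ) (Set.mem_Ioi.2 (by linarith)) (lt_add_one τ))

lemma L_tendsto : Tendsto (fun τ : ℝ => (τ ^ 4 - 3 * τ ^ 2) / (τ ^ 4 - τ ^ 2 + 3)) atTop (nhds 1) := by
  have hinv : Tendsto (fun τ : ℝ => τ⁻¹) atTop (nhds 0) := tendsto_inv_atTop_zero
  have h2 : Tendsto (fun τ : ℝ => (τ⁻¹) ^ 2) atTop (nhds 0) := by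
    simpa using hinv.pow 2
  have h4 : Tendsto (fun τ : ℝ => (τ⁻¹) ^ 4) atTop (nhds 0) := by
    simpa using hinv.pow 4
  have hnum : Tendsto (fun τ : ℝ => 1 - 3 * (τ⁻¹) ^ 2) atTop (nhds 1) := by
    have := (tendsto_const_nhds (x := (1:ℝ)) (f := atTop)).sub (h2.const_mul 3)
    simpa using this
  have hden : Tendsto (fun τ : ℝ => 1 - (τ⁻¹) ^ 2 + 3 * (τ⁻¹) ^ 4) atTop (nhds 1) := by
    have := ((tendsto_const_nhds (x := (1:ℝ)) (f := atTop)).sub h2).add (h4.const_mul 3)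
    simpa using this
  have := hnum.div hden one_ne_zero
  rw [div_one] at this
  refine this.congr' ?_
  refine Filter.eventually_atTop.2 ⟨1, fun τ hτ => ?_⟩
  have hτ0 : τ ≠ 0 := by linarith
  have hD : (0:ℝ) < τ ^ 4 - τ ^ 2 + 3 := by nlinarith [sq_nonneg (τ ^ 2 - 1/2)]
  have h1 : (τ⁻¹) ^ 2 * τ ^ 2 = 1 := by field_simp
  have hsq : (1:ℝ) ≤ τ ^ 2 := by nlinarith
  have hle1 : (τ⁻¹) ^ 2 ≤ 1 := by nlinarith [h1, hsq]
  have hpos4 : (0:ℝ) < (τ⁻¹) ^ 4 := pow_pos (inv_pos.2 (by linarith)) 4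
  have hDen : (0:ℝ) < 1 - (τ⁻¹) ^ 2 + 3 * (τ⁻¹) ^ 4 := by linarith
  show (1 - 3 * (τ⁻¹) ^ 2) / (1 - (τ⁻¹) ^ 2 + 3 * (τ⁻¹) ^ 4)
      = (τ ^ 4 - 3 * τ ^ 2) / (τ ^ 4 - τ ^ 2 + 3)
  rw [div_eq_div_iff hDen.ne' hD.ne']
  field_simp

lemma alpha_atTop : Tendsto (fun τ : ℝ => alphaConst τ / (1 / τ)) atTop (nhds 1) := by
  refine tendsto_of_tendsto_of_tendsto_of_le_of_le' L_tendsto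
    (tendsto_const_nhds (x := (1:ℝ))) ?_ ?_
  · refine Filter.eventually_atTop.2 ⟨1, fun τ hτ => ?_⟩
    have hτ0 : (0:ℝ) < τ := by linarith
    have hB : (0:ℝ) < GG τ := GG_pos τ
    have hA : (0:ℝ) < gg τ := gg_pos τ
    have hD : (0:ℝ) < τ ^ 4 - τ ^ 2 + 3 := by nlinarith [sq_nonneg (τ ^ 2 - 1/2)]
    have h5 : (0:ℝ) < τ ^ 5 := pow_pos hτ0 5
    have key : GG τ * τ ^ 5 < gg τ * (τ ^ 4 - τ ^ 2 + 3) := by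
      have hK := KK_pos hτ0
      rw [KK, sub_pos, mul_div_assoc'] at hK
      exact (lt_div_iff₀ h5).1 hK
    have hc : gg τ = (gg τ / GG τ) * GG τ := (div_mul_cancel₀ _ hB.ne').symm
    have key2 : GG τ * τ ^ 5 < (gg τ / GG τ) * GG τ * (τ ^ 4 - τ ^ 2 + 3) := by
      rw [← hc]; exact key
    rw [one_div, div_inv_eq_mul, alpha_eq]
    have expand : (-τ + gg τ / GG τ) * τ = τ * (gg τ / GG τ) - τ ^ 2 := by ring
    rw [expand, div_le_iff₀ hD]
    set c := gg τ / GG τ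
    nlinarith [mul_pos hτ0 (sub_pos.2 key2), hB, mul_pos hB hD]
  · refine Filter.eventually_atTop.2 ⟨1, fun τ hτ => ?_⟩
    have hτ0 : (0:ℝ) < τ := by linarith
    have hB : (0:ℝ) < GG τ := GG_pos τ
    have key : τ * gg τ < (τ ^ 2 + 1) * GG τ := by
      have := HH_pos τ; rw [HH, sub_pos] at this; exact this
    rw [one_div, div_inv_eq_mul, alpha_eq]
    have h2 : τ * (gg τ / GG τ) < τ ^ 2 + 1 := by
      rw [mul_div_assoc']
      exact (div_lt_iff₀ hB).2 (by linarith)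
    nlinarith [h2]

theorem alphaConst_properties :
    (∀ τ : ℝ, 0 < alphaConst τ) ∧
    StrictAnti alphaConst ∧
    Tendsto (fun τ : ℝ => alphaConst τ / (-τ)) atBot (nhds 1) ∧
    Tendsto (fun τ : ℝ => alphaConst τ / (1 / τ)) atTop (nhds 1) :=
  ⟨alpha_pos, alpha_strictAnti, alpha_atBot, alpha_atTop⟩
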